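/- arXiv:0804.0188 — 2 statements merged into one kernel-verified Lean document; each statement's English description precedes it below -/
import Mathlib

section
/- Given $K_0 \in S^n$, $\alpha \in \mathbb{R}^n$, $Y = \mathrm{diag}(y)$ for a label vector $y \in \mathbb{R}^n$, and $\rho > 0$, the unique minimizer over $K \succeq 0$ of $f(K) = \alpha^T e - \tfrac12 \mathrm{Tr}(K (Y\alpha)(Y\alpha)^T) + \rho \|K - K_0\|_F^2$ is $K^* = (K_0 + (Y\alpha)(Y\alpha)^T/(4\rho))_+$, the projection of $K_0 + (Y\alpha)(Y\alpha)^T/(4\rho)$ onto the positive semidefinite cone. -/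
open Matrix

noncomputable def frob2 {n : ℕ} (M : Matrix (Fin n) (Fin n) ℝ) : ℝ :=
  Matrix.trace (Mᵀ * M)

/-- `P` is the projection of `M` onto the PSD cone in Frobenius norm. -/
def IsPSDProj {n : ℕ} (M P : Matrix (Fin n) (Fin n) ℝ) : Prop :=
  P.PosSemidef ∧ ∀ K : Matrix (Fin n) (Fin n) ℝ, K.PosSemidef →
    frob2 (P - M) ≤ frob2 (K - M)

lemma frob2_apply {n : ℕ} (M : Matrix (Fin n) (Fin n) ℝ) :
    frob2 M = ∑ i, ∑ j, M j i * M j i := by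
  simp [frob2, Matrix.trace, Matrix.mul_apply, Matrix.diag, Matrix.transpose_apply]

lemma frob2_nonneg {n : ℕ} (M : Matrix (Fin n) (Fin n) ℝ) : 0 ≤ frob2 M := by
  rw [frob2_apply]
  exact Finset.sum_nonneg fun i _ => Finset.sum_nonneg fun j _ => mul_self_nonneg _

lemma frob2_eq_zero {n : ℕ} (M : Matrix (Fin n) (Fin n) ℝ) (h : frob2 M = 0) : M = 0 := by
  rw [frob2_apply] at h
  ext i j
  have h1 := (Finset.sum_eq_zero_iff_of_nonneg
    (fun k _ => Finset.sum_nonneg fun l _ => mul_self_nonneg (M l k))).mp h j (Finset.mem_univ j)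
  have h2 := (Finset.sum_eq_zero_iff_of_nonneg
    (fun l _ => mul_self_nonneg (M l j))).mp h1 i (Finset.mem_univ i)
  simpa using mul_self_eq_zero.mp h2

lemma frob2_smul {n : ℕ} (c : ℝ) (M : Matrix (Fin n) (Fin n) ℝ) :
    frob2 (c • M) = c ^ 2 * frob2 M := by
  simp only [frob2_apply, Matrix.smul_apply, smul_eq_mul, Finset.mul_sum]
  exact Finset.sum_congr rfl fun i _ => Finset.sum_congr rfl fun j _ => by ring

lemma frob2_parallelogram {n : ℕ} (A B : Matrix (Fin n) (Fin n) ℝ) :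
    frob2 (A + B) + frob2 (A - B) = 2 * frob2 A + 2 * frob2 B := by
  simp only [frob2_apply, Matrix.add_apply, Matrix.sub_apply, Finset.mul_sum,
    ← Finset.sum_add_distrib]
  exact Finset.sum_congr rfl fun i _ => Finset.sum_congr rfl fun j _ => by ring

lemma trace_mul_vecMulVec {n : ℕ} (A : Matrix (Fin n) (Fin n) ℝ) (v : Fin n → ℝ) :
    Matrix.trace (A * Matrix.vecMulVec v v) = ∑ i, ∑ j, A j i * (v i * v j) := by
  simp only [Matrix.trace, Matrix.diag, Matrix.mul_apply, Matrix.vecMulVec_apply]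
  exact Finset.sum_comm

lemma key_identity {n : ℕ} (ρ : ℝ) (hρ : ρ ≠ 0) (K K₀ : Matrix (Fin n) (Fin n) ℝ)
    (v : Fin n → ℝ) :
    -((1/2) * Matrix.trace (K * Matrix.vecMulVec v v)) + ρ * frob2 (K - K₀)
      = ρ * frob2 (K - (K₀ + (1/(4*ρ)) • Matrix.vecMulVec v v))
        - (1/2) * Matrix.trace (K₀ * Matrix.vecMulVec v v)
        - (1/(16*ρ)) * frob2 (Matrix.vecMulVec v v) := by
  rw [trace_mul_vecMulVec, trace_mul_vecMulVec, frob2_apply, frob2_apply, frob2_apply]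
  simp only [Matrix.sub_apply, Matrix.add_apply, Matrix.smul_apply, Matrix.vecMulVec_apply,
    smul_eq_mul, Finset.mul_sum, ← Finset.sum_sub_distrib, ← Finset.sum_add_distrib, neg_eq_iff_eq_neg,
    ← Finset.sum_neg_distrib]
  refine Finset.sum_congr rfl fun i _ => Finset.sum_congr rfl fun j _ => ?_
  field_simp
  ring

/-- the unique minimizer over `K ⪰ 0` of
`f(K) = αᵀe - ½ Tr(K (Yα)(Yα)ᵀ) + ρ ‖K - K₀‖_F²` is the PSD projection of
`K₀ + (Yα)(Yα)ᵀ/(4ρ)`. -/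
theorem inner_kernel_learning_solution {n : ℕ}
    (K₀ Kstar : Matrix (Fin n) (Fin n) ℝ) (α y : Fin n → ℝ) (ρ : ℝ)
    (hK₀ : K₀.IsSymm) (hρ : 0 < ρ)
    (v : Fin n → ℝ) (hv : v = (Matrix.diagonal y) *ᵥ α)
    (f : Matrix (Fin n) (Fin n) ℝ → ℝ)
    (hf : ∀ K, f K = (∑ i, α i) - (1/2) * Matrix.trace (K * Matrix.vecMulVec v v)
        + ρ * frob2 (K - K₀))
    (hproj : IsPSDProj (K₀ + (1/(4*ρ)) • Matrix.vecMulVec v v) Kstar) :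
    Kstar.PosSemidef ∧
    (∀ K : Matrix (Fin n) (Fin n) ℝ, K.PosSemidef → f Kstar ≤ f K) ∧
    (∀ K : Matrix (Fin n) (Fin n) ℝ, K.PosSemidef → f K = f Kstar → K = Kstar) := by
  obtain ⟨hP, hmin⟩ := hproj
  set M : Matrix (Fin n) (Fin n) ℝ := K₀ + (1/(4*ρ)) • Matrix.vecMulVec v v with hM
  have hρ' : ρ ≠ 0 := ne_of_gt hρ
  have keyf : ∀ K, f K = ρ * frob2 (K - M)
      + ((∑ i, α i) - (1/2) * Matrix.trace (K₀ * Matrix.vecMulVec v v)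
        - (1/(16*ρ)) * frob2 (Matrix.vecMulVec v v)) := by
    intro K
    have := key_identity ρ hρ' K K₀ v
    rw [hf K]
    rw [hM]
    linarith
  refine ⟨hP, ?_, ?_⟩
  · intro K hK
    rw [keyf, keyf]
    have := hmin K hK
    nlinarith
  · intro K hK heq
    have h1 : frob2 (K - M) = frob2 (Kstar - M) := by
      have e1 := keyf K
      have e2 := keyf Kstar
      rw [e1, e2] at heq
      have : ρ * frob2 (K - M) = ρ * frob2 (Kstar - M) := by linarith
      exact mul_left_cancel₀ hρ' this
    have hadd := hK.add hP
    have hPpsd : ((1/2 : ℝ) • (K + Kstar)).PosSemidef := by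
      refine ⟨?_, fun x => ?_⟩
      · have h1 := hadd.1
        unfold Matrix.IsHermitian at h1 ⊢
        rw [Matrix.conjTranspose_smul, h1]
        norm_num
      · have h2 := hadd.2 x
        simp only [Finsupp.sum, Matrix.smul_apply, smul_eq_mul] at h2 ⊢
        have e : ∀ i j, star (x i) * ((1/2:ℝ) * (K + Kstar) i j) * x j
            = (1/2) * (star (x i) * (K + Kstar) i j * x j) := fun i j => by ring
        simp only [e, ← Finset.mul_sum]
        exact mul_nonneg (by norm_num) h2
    have hge := hmin _ hPpsd
    have hrw : (1/2 : ℝ) • (K + Kstar) - M = (1/2 : ℝ) • ((K - M) + (Kstar - M)) := by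
      module
    rw [hrw, frob2_smul] at hge
    have hpar := frob2_parallelogram (K - M) (Kstar - M)
    have hsub : (K - M) - (Kstar - M) = K - Kstar := by module
    rw [hsub] at hpar
    have hz : frob2 (K - Kstar) ≤ 0 := by nlinarith
    have := frob2_eq_zero _ (le_antisymm hz (frob2_nonneg _))
    exact sub_eq_zero.mp this
end

section
/- If $K_0 \succeq 0$, then the value of the penalized inner minimum satisfies $\min_{K \succeq 0}\left(\alpha^T e - \tfrac12 \mathrm{Tr}(K(Y\alpha)(Y\alpha)^T) + \rho\|K-K_0\|_F^2\right) = \alpha^T e - \tfrac12 \mathrm{Tr}(K_0 (Y\alpha)(Y\alpha)^T) - \tfrac{1}{16\rho}\sum_{i,j} (\alpha_i \alpha_j)^2$ for all $\alpha \in \mathbb{R}^n$ and $\rho > 0$. -/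
open Matrix

lemma frob2_eq {n : ℕ} (A : Matrix (Fin n) (Fin n) ℝ) :
    frob2 A = ∑ i, ∑ j, (A i j)^2 := by
  simp only [frob2, Matrix.trace, Matrix.diag, Matrix.mul_apply, Matrix.transpose_apply, sq]
  rw [Finset.sum_comm]

lemma trace_mul_sum {n : ℕ} (A B : Matrix (Fin n) (Fin n) ℝ) :
    Matrix.trace (A * B) = ∑ i, ∑ j, A i j * B j i := by
  simp [Matrix.trace, Matrix.diag, Matrix.mul_apply]

lemma psd_smul_vvt {n : ℕ} (c : ℝ) (hc : 0 ≤ c) (v : Fin n → ℝ) :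
    (c • Matrix.vecMulVec v v).PosSemidef := by
  rw [Matrix.posSemidef_iff_dotProduct_mulVec]
  constructor
  · ext i j
    simp [Matrix.vecMulVec_apply, mul_comm]
  · intro x
    have : dotProduct (star x) ((c • Matrix.vecMulVec v v) *ᵥ x)
        = c * (∑ i, v i * x i)^2 := by
      simp only [dotProduct, Matrix.mulVec, Matrix.smul_apply, Matrix.vecMulVec_apply,
        star_trivial, dotProduct, sq, Finset.mul_sum, Finset.sum_mul, smul_eq_mul]
      rw [Finset.sum_comm]
      exact Finset.sum_congr rfl fun i _ => Finset.sum_congr rfl fun j _ => by ring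
    rw [this]
    positivity

/-- for PSD `K₀`, the penalized inner minimum has the explicit
value `αᵀe - ½Tr(K₀(Yα)(Yα)ᵀ) - (1/16ρ) ∑_{i,j} (αᵢαⱼ)²`. -/
theorem inner_min_value_psd {n : ℕ}
    (K₀ : Matrix (Fin n) (Fin n) ℝ) (α y : Fin n → ℝ) (ρ : ℝ)
    (hK₀ : K₀.PosSemidef) (hy : ∀ i, y i = 1 ∨ y i = -1) (hρ : 0 < ρ)
    (v : Fin n → ℝ) (hv : v = (Matrix.diagonal y) *ᵥ α) :
    sInf { t : ℝ | ∃ K : Matrix (Fin n) (Fin n) ℝ, K.PosSemidef ∧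
      t = (∑ i, α i) - (1/2) * Matrix.trace (K * Matrix.vecMulVec v v)
        + ρ * frob2 (K - K₀) }
    = (∑ i, α i) - (1/2) * Matrix.trace (K₀ * Matrix.vecMulVec v v)
        - (1/(16*ρ)) * ∑ i, ∑ j, (α i * α j)^2 := by
  set M : Matrix (Fin n) (Fin n) ℝ := Matrix.vecMulVec v v with hM
  have hρ' : ρ ≠ 0 := ne_of_gt hρ
  have hvly : ∀ i, v i = y i * α i := by
    intro i; rw [hv]; simp [Matrix.mulVec_diagonal]
  have hMsym : ∀ i j, M j i = M i j := by
    intro i j; simp [hM, Matrix.vecMulVec_apply, mul_comm]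
  -- frob2 M = ∑∑ (α i α j)^2
  have hF : frob2 M = ∑ i, ∑ j, (α i * α j)^2 := by
    rw [frob2_eq]
    refine Finset.sum_congr rfl fun i _ => Finset.sum_congr rfl fun j _ => ?_
    simp only [hM, Matrix.vecMulVec_apply, hvly]
    rcases hy i with h | h <;> rcases hy j with h' | h' <;> rw [h, h'] <;> ring
  -- the candidate minimizer
  set Kstar : Matrix (Fin n) (Fin n) ℝ := K₀ + (1/(4*ρ)) • M with hKs
  set T : ℝ := (∑ i, α i) - (1/2) * Matrix.trace (K₀ * M)
        - (1/(16*ρ)) * ∑ i, ∑ j, (α i * α j)^2 with hT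
  -- key lower bound: for any K (PSD or not)
  have key : ∀ K : Matrix (Fin n) (Fin n) ℝ,
      T ≤ (∑ i, α i) - (1/2) * Matrix.trace (K * M) + ρ * frob2 (K - K₀) := by
    intro K
    set D : Matrix (Fin n) (Fin n) ℝ := K - K₀ with hD
    have hKD : K = K₀ + D := by rw [hD, add_sub_cancel]
    have htr : Matrix.trace (K * M) = Matrix.trace (K₀ * M) + ∑ i, ∑ j, D i j * M j i := by
      rw [hKD, Matrix.add_mul, Matrix.trace_add, trace_mul_sum D M]
    rw [htr, hT, ← hF, frob2_eq M, frob2_eq D]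
    have h0 : 0 ≤ ∑ i, ∑ j,
        (ρ * (D i j)^2 - (1/2) * (D i j * M j i) + (1/(16*ρ)) * (M i j)^2) := by
      refine Finset.sum_nonneg fun i _ => Finset.sum_nonneg fun j _ => ?_
      rw [hMsym i j]
      have heq : ρ * (D i j)^2 - (1/2) * (D i j * M i j) + (1/(16*ρ)) * (M i j)^2
          = ((ρ * D i j - M i j / 4)^2) / ρ := by field_simp; ring
      rw [heq]; positivity
    have hsplit : ∑ i, ∑ j,
        (ρ * (D i j)^2 - (1/2) * (D i j * M j i) + (1/(16*ρ)) * (M i j)^2)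
        = ρ * (∑ i, ∑ j, (D i j)^2) - (1/2) * (∑ i, ∑ j, D i j * M j i)
          + (1/(16*ρ)) * (∑ i, ∑ j, (M i j)^2) := by
      simp only [Finset.mul_sum, ← Finset.sum_sub_distrib, ← Finset.sum_add_distrib]
    rw [hsplit] at h0
    linarith
  have hmem : T ∈ { t : ℝ | ∃ K : Matrix (Fin n) (Fin n) ℝ, K.PosSemidef ∧
      t = (∑ i, α i) - (1/2) * Matrix.trace (K * M) + ρ * frob2 (K - K₀) } := by
    refine ⟨Kstar, ?_, ?_⟩
    · exact hK₀.add (psd_smul_vvt _ (by positivity) v)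
    · have h1 : Kstar - K₀ = (1/(4*ρ)) • M := by rw [hKs, add_sub_cancel_left]
      have h2 : frob2 ((1/(4*ρ)) • M) = (1/(4*ρ))^2 * frob2 M := by
        simp only [frob2_eq, Matrix.smul_apply, smul_eq_mul, mul_pow, Finset.mul_sum]
      have h3 : Matrix.trace (Kstar * M)
          = Matrix.trace (K₀ * M) + (1/(4*ρ)) * frob2 M := by
        rw [hKs, Matrix.add_mul, Matrix.trace_add, Matrix.smul_mul, Matrix.trace_smul,
          trace_mul_sum M M, frob2_eq M, smul_eq_mul]
        congr 1
        congr 1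
        refine Finset.sum_congr rfl fun i _ => Finset.sum_congr rfl fun j _ => ?_
        rw [hMsym i j, sq]
      rw [h1, h2, h3, hT, ← hF]
      field_simp
      ring
  refine le_antisymm (csInf_le ⟨T, fun t ht => ?_⟩ hmem) (le_csInf ⟨T, hmem⟩ fun t ht => ?_)
  · obtain ⟨K, _, rfl⟩ := ht
    exact key K
  · obtain ⟨K, _, rfl⟩ := ht
    exact key K
end
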